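/- (Theorem 2) Let H be a finite-dimensional real Hilbert space and let A, B, C be self-adjoint positive definite linear operators on H. Let a₁,…,a_m > 0 and b₁,…,b_m > 0. Suppose v, v₁, …, v_m : [0,∞) → H are continuously differentiable, f : [0,∞) → H is continuous, and for all t > 0: (B + Σ_{i=1}^m (a_i/b_i) C) v′(t) − Σ_{i=1}^m (a_i/b_i) C v_i′(t) + A v(t) = f(t), and v_i′(t) + b_i v_i(t) − v′(t) = 0 for each i = 1,…,m, with v(0) = u₀ and v_i(0) = 0 for each i. Then for all t > 0: ⟪A v(t), v(t)⟫ + Σ_{i=1}^m a_i ⟪C v_i(t), v_i(t)⟫ ≤ ⟪A u₀, u₀⟫ + (1/2) ∫₀^t ⟪B⁻¹ f(s), f(s)⟫ ds. -/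

import Mathlib

open scoped RealInnerProductSpace
open MeasureTheory

/-- **Theorem 2.** Stability estimate for the local system obtained after
approximating the kernel by a sum of exponentials:
`‖v(t)‖²_A + Σᵢ aᵢ ‖vᵢ(t)‖²_C ≤ ‖u₀‖²_A + (1/2) ∫₀ᵗ ‖f(s)‖²_{B⁻¹} ds`. -/
theorem stability_local_system
    {H : Type*} [NormedAddCommGroup H] [InnerProductSpace ℝ H] [FiniteDimensional ℝ H]
    (A B C Binv : H →ₗ[ℝ] H)
    (hAsa : ∀ x y : H, ⟪A x, y⟫ = ⟪x, A y⟫)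
    (hBsa : ∀ x y : H, ⟪B x, y⟫ = ⟪x, B y⟫)
    (hCsa : ∀ x y : H, ⟪C x, y⟫ = ⟪x, C y⟫)
    (hApd : ∃ ν > (0:ℝ), ∀ x : H, ν * ‖x‖ ^ 2 ≤ ⟪A x, x⟫)
    (hBpd : ∃ ν > (0:ℝ), ∀ x : H, ν * ‖x‖ ^ 2 ≤ ⟪B x, x⟫)
    (hCpd : ∃ ν > (0:ℝ), ∀ x : H, ν * ‖x‖ ^ 2 ≤ ⟪C x, x⟫)
    (hBinv₁ : ∀ x : H, B (Binv x) = x)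
    (hBinv₂ : ∀ x : H, Binv (B x) = x)
    (m : ℕ) (a b : Fin m → ℝ) (ha : ∀ i, 0 < a i) (hb : ∀ i, 0 < b i)
    (f : ℝ → H) (hf : ContinuousOn f (Set.Ici 0))
    (v v' : ℝ → H) (vi vi' : Fin m → ℝ → H)
    (hv : ∀ t ∈ Set.Ici (0:ℝ), HasDerivWithinAt v (v' t) (Set.Ici 0) t)
    (hv' : ContinuousOn v' (Set.Ici 0))
    (hvi : ∀ i, ∀ t ∈ Set.Ici (0:ℝ), HasDerivWithinAt (vi i) (vi' i t) (Set.Ici 0) t)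
    (hvi' : ∀ i, ContinuousOn (vi' i) (Set.Ici 0))
    (u₀ : H) (hv₀ : v 0 = u₀) (hvi₀ : ∀ i, vi i 0 = 0)
    (heq : ∀ t > (0:ℝ),
      (B (v' t) + ∑ i, (a i / b i) • C (v' t)) - (∑ i, (a i / b i) • C (vi' i t))
        + A (v t) = f t)
    (heqi : ∀ i, ∀ t > (0:ℝ), vi' i t + b i • vi i t - v' t = 0) :
    ∀ t > (0:ℝ),
      ⟪A (v t), v t⟫ + (∑ i, a i * ⟪C (vi i t), vi i t⟫)
        ≤ ⟪A u₀, u₀⟫ + (1 / 2) * ∫ s in (0:ℝ)..t, ⟪Binv (f s), f s⟫ := by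
  have hBinvc : Continuous Binv := Binv.continuous_of_finiteDimensional
  set φ : ℝ → ℝ := fun s => ⟪Binv (f s), f s⟫ with hφ
  have hφcont : ContinuousOn φ (Set.Ici 0) :=
    ((hBinvc.comp_continuousOn hf).inner hf)
  have hint : ∀ t : ℝ, 0 ≤ t → IntervalIntegrable φ volume 0 t := by
    intro t ht
    apply ContinuousOn.intervalIntegrable
    apply hφcont.mono
    rw [Set.uIcc_of_le ht]
    exact Set.Icc_subset_Ici_self
  set F : ℝ → ℝ := fun t => ∫ s in (0:ℝ)..t, φ s with hF
  set E : ℝ → ℝ := fun t => ⟪A (v t), v t⟫ + ∑ i, a i * ⟪C (vi i t), vi i t⟫ with hE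
  set g : ℝ → ℝ := fun t => E t - (1/2) * F t with hg
  -- continuous linear versions of the operators
  set Ac : H →L[ℝ] H := A.toContinuousLinearMap with hAc
  set Cc : H →L[ℝ] H := C.toContinuousLinearMap with hCc
  -- nonnegativity of the quadratic forms
  have hBnn : ∀ x : H, 0 ≤ ⟪B x, x⟫ := by
    obtain ⟨ν, hν, h⟩ := hBpd
    intro x; exact le_trans (by positivity) (h x)
  have hCnn : ∀ x : H, 0 ≤ ⟪C x, x⟫ := by
    obtain ⟨ν, hν, h⟩ := hCpd
    intro x; exact le_trans (by positivity) (h x)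
  -- continuity of g on [0, ∞)
  have hvc : ContinuousOn v (Set.Ici 0) := fun t ht => (hv t ht).continuousWithinAt
  have hvic : ∀ i, ContinuousOn (vi i) (Set.Ici 0) :=
    fun i t ht => (hvi i t ht).continuousWithinAt
  have hEcont : ContinuousOn E (Set.Ici 0) := by
    apply ContinuousOn.add
    · exact (Ac.continuous.comp_continuousOn hvc).inner hvc
    · apply continuousOn_finset_sum
      intro i _
      exact continuousOn_const.mul ((Cc.continuous.comp_continuousOn (hvic i)).inner (hvic i))
  have hFcont : ContinuousOn F (Set.Ici 0) := by
    intro t ht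
    rcases eq_or_lt_of_le (Set.mem_Ici.mp ht) with h0 | h0
    · -- t = 0
      subst h0
      have hmeas : StronglyMeasurableAtFilter φ (nhdsWithin 0 (Set.Ioi 0)) volume :=
        (hφcont.stronglyMeasurableAtFilter_nhdsWithin measurableSet_Ici 0).filter_mono
          (nhdsWithin_mono 0 (Set.Ioi_subset_Ici le_rfl))
      exact (intervalIntegral.integral_hasDerivWithinAt_right (hint 0 le_rfl) hmeas
        ((hφcont 0 Set.self_mem_Ici).mono (Set.Ioi_subset_Ici le_rfl))).continuousWithinAt
    · -- t > 0
      have hmeas : StronglyMeasurableAtFilter φ (nhds t) volume :=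
        (hφcont.mono (Set.Ioi_subset_Ici le_rfl)).stronglyMeasurableAtFilter isOpen_Ioi t h0
      have hct : ContinuousAt φ t :=
        (hφcont t ht).continuousAt (Ici_mem_nhds h0)
      exact ((intervalIntegral.integral_hasDerivAt_right (hint t h0.le) hmeas
        hct).continuousAt).continuousWithinAt
  have hgcont : ContinuousOn g (Set.Ici 0) := hEcont.sub (continuousOn_const.mul hFcont)
  -- the candidate derivative of g
  set D : ℝ → ℝ := fun x =>
    ((⟪A (v x), v' x⟫ + ⟪A (v' x), v x⟫)
      + ∑ i, a i * (⟪C (vi i x), vi' i x⟫ + ⟪C (vi' i x), vi i x⟫))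
      - (1/2) * φ x with hD
  have hderiv : ∀ x ∈ interior (Set.Ici (0:ℝ)),
      HasDerivWithinAt g (D x) (interior (Set.Ici (0:ℝ))) x := by
    rw [interior_Ici]
    intro x hx
    have hx0 : (0:ℝ) < x := hx
    have hvx : HasDerivAt v (v' x) x := (hv x hx0.le).hasDerivAt (Ici_mem_nhds hx0)
    have hAx : HasDerivAt (fun t => A (v t)) (A (v' x)) x :=
      Ac.hasFDerivAt.comp_hasDerivAt x hvx
    have hE1 : HasDerivAt (fun t => (⟪A (v t), v t⟫ : ℝ))
        (⟪A (v x), v' x⟫ + ⟪A (v' x), v x⟫) x := hAx.inner ℝ hvx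
    have hE2 : HasDerivAt (fun t => ∑ i, a i * (⟪C (vi i t), vi i t⟫ : ℝ))
        (∑ i, a i * (⟪C (vi i x), vi' i x⟫ + ⟪C (vi' i x), vi i x⟫)) x := by
      apply HasDerivAt.fun_sum
      intro i _
      have hvix : HasDerivAt (vi i) (vi' i x) x :=
        (hvi i x hx0.le).hasDerivAt (Ici_mem_nhds hx0)
      have hCx : HasDerivAt (fun t => C (vi i t)) (C (vi' i x)) x :=
        Cc.hasFDerivAt.comp_hasDerivAt x hvix
      exact (hCx.inner ℝ hvix).const_mul (a i)
    have hmeas : StronglyMeasurableAtFilter φ (nhds x) volume :=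
      (hφcont.mono (Set.Ioi_subset_Ici le_rfl)).stronglyMeasurableAtFilter isOpen_Ioi x hx0
    have hct : ContinuousAt φ x := (hφcont x hx0.le).continuousAt (Ici_mem_nhds hx0)
    have hFx : HasDerivAt F (φ x) x :=
      intervalIntegral.integral_hasDerivAt_right (hint x hx0.le) hmeas hct
    exact ((hE1.add hE2).sub (hFx.const_mul (1/2))).hasDerivWithinAt
  -- the derivative is nonpositive
  have hDnonpos : ∀ x ∈ interior (Set.Ici (0:ℝ)), D x ≤ 0 := by
    rw [interior_Ici]
    intro x hx
    have hx0 : (0:ℝ) < x := hx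
    set V := v' x with hV
    have hvi'eq : ∀ i, vi' i x = V - b i • vi i x := by
      intro i
      have h := heqi i x hx0
      have h2 : vi' i x + b i • vi i x = v' x := by
        have := sub_eq_zero.mp h
        exact this
      exact eq_sub_of_add_eq h2
    -- inner product of the main equation with V
    have hEq := heq x hx0
    have hIP : ⟪(B (v' x) + ∑ i, (a i / b i) • C (v' x))
        - (∑ i, (a i / b i) • C (vi' i x)) + A (v x), V⟫ = ⟪f x, V⟫ := by
      rw [hEq]
    have hterm : ∀ i : Fin m,
        (a i / b i) * ⟪C V, V⟫ - (a i / b i) * ⟪C (vi' i x), V⟫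
          = a i * ⟪C (vi i x), V⟫ := by
      intro i
      rw [hvi'eq i]
      simp only [map_sub, LinearMap.map_smul, inner_sub_left, real_inner_smul_left]
      field_simp [(hb i).ne']
      ring
    have hIP2 : ⟪B V, V⟫ + (∑ i, (a i / b i) * ⟪C V, V⟫)
        - (∑ i, (a i / b i) * ⟪C (vi' i x), V⟫) + ⟪A (v x), V⟫ = ⟪f x, V⟫ := by
      rw [← hIP]
      simp only [inner_add_left, inner_sub_left, sum_inner, real_inner_smul_left, hV]
    have hsum : (∑ i, (a i / b i) * ⟪C V, V⟫) - (∑ i, (a i / b i) * ⟪C (vi' i x), V⟫)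
        = ∑ i, a i * ⟪C (vi i x), V⟫ := by
      rw [← Finset.sum_sub_distrib]
      exact Finset.sum_congr rfl fun i _ => hterm i
    have h1 : ⟪A (v x), V⟫ + (∑ i, a i * ⟪C (vi i x), V⟫) = ⟪f x, V⟫ - ⟪B V, V⟫ := by
      rw [← hsum]; linarith [hIP2]
    -- quadratic inequality using positivity of B
    set w := Binv (f x) with hw
    have hfw : f x = B w := (hBinv₁ (f x)).symm
    have hkey : 0 ≤ ⟪B (V - (1/2:ℝ) • w), V - (1/2:ℝ) • w⟫ := hBnn _
    have hxpd : ⟪B V, w⟫ = ⟪B w, V⟫ := by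
      rw [hBsa V w, real_inner_comm]
    have hexp : ⟪B (V - (1/2:ℝ) • w), V - (1/2:ℝ) • w⟫
        = ⟪B V, V⟫ - ⟪B w, V⟫ + (1/4) * ⟪B w, w⟫ := by
      simp only [map_sub, LinearMap.map_smul, inner_sub_left, inner_sub_right,
        real_inner_smul_left, real_inner_smul_right]
      rw [hxpd]
      ring
    have h3 : 2 * ⟪f x, V⟫ - 2 * ⟪B V, V⟫ ≤ (1/2) * φ x := by
      have hφx : φ x = ⟪B w, w⟫ := by
        show ⟪Binv (f x), f x⟫ = ⟪B w, w⟫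
        rw [hfw, hBinv₂, real_inner_comm]
      rw [hφx, hfw]
      nlinarith [hkey, hexp]
    -- rewrite the C-terms
    have hCterm : ∀ i : Fin m,
        ⟪C (vi i x), vi' i x⟫ + ⟪C (vi' i x), vi i x⟫
          = 2 * ⟪C (vi i x), V⟫ - 2 * (b i * ⟪C (vi i x), vi i x⟫) := by
      intro i
      have hcomm : ⟪C (vi' i x), vi i x⟫ = ⟪C (vi i x), vi' i x⟫ := by
        rw [hCsa, real_inner_comm]
      rw [hcomm, hvi'eq i, inner_sub_right, real_inner_smul_right]
      ring
    have hAterm : ⟪A (v' x), v x⟫ = ⟪A (v x), V⟫ := by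
      rw [hAsa, real_inner_comm, hV]
    have hsumC : ∑ i, a i * (⟪C (vi i x), vi' i x⟫ + ⟪C (vi' i x), vi i x⟫)
        = 2 * (∑ i, a i * ⟪C (vi i x), V⟫)
          - 2 * ∑ i, a i * (b i * ⟪C (vi i x), vi i x⟫) := by
      rw [Finset.mul_sum, Finset.mul_sum, ← Finset.sum_sub_distrib]
      apply Finset.sum_congr rfl
      intro i _
      rw [hCterm i]
      ring
    have hsumCnn : 0 ≤ ∑ i, a i * (b i * ⟪C (vi i x), vi i x⟫) :=
      Finset.sum_nonneg fun i _ =>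
        mul_nonneg (ha i).le (mul_nonneg (hb i).le (hCnn _))
    simp only [hD]
    rw [hAterm, hsumC]
    nlinarith [h1, h3, hsumCnn]
  -- g is antitone on [0, ∞)
  have hanti : AntitoneOn g (Set.Ici 0) :=
    antitoneOn_of_hasDerivWithinAt_nonpos (convex_Ici 0) hgcont hderiv hDnonpos
  intro t ht
  have hgle : g t ≤ g 0 := hanti Set.self_mem_Ici (Set.mem_Ici.mpr ht.le) ht.le
  have hg0 : g 0 = ⟪A u₀, u₀⟫ := by
    simp only [hg, hE, hF, hv₀, hvi₀, intervalIntegral.integral_same]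
    simp [inner_zero_right]
  have hgt : g t = (⟪A (v t), v t⟫ + ∑ i, a i * ⟪C (vi i t), vi i t⟫)
      - (1/2) * ∫ s in (0:ℝ)..t, ⟪Binv (f s), f s⟫ := rfl
  rw [hgt, hg0] at hgle
  linarith
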